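/- Any two edge-disjoint 4-cycles whose vertex sets are not disjoint and whose union contains 6, 7 or 8 vertices form one of exactly four configurations up to isomorphism: two non-isomorphic (6,2)-configurations (one of which is the double-diamond, two 4-cycles sharing a diagonal), a unique (7,2)-configuration, and a unique (8,2)-configuration; in particular, no (5,2)-configuration exists. -/

import Mathlib

open Finset

/-- The edge set of the 4-cycle `(a, b, c, d)`: edges {a,b}, {b,c}, {c,d}, {d,a}. -/
def cycEdges {V : Type*} [DecidableEq V] (a b c d : V) : Finset (Sym2 V) :=
  {s(a, b), s(b, c), s(c, d), s(d, a)}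

/-- `E` is the edge set of a 4-cycle on four distinct vertices. -/
def IsFourCycle {V : Type*} [DecidableEq V] (E : Finset (Sym2 V)) : Prop :=
  ∃ a b c d : V, ([a, b, c, d] : List V).Nodup ∧ E = cycEdges a b c d

/-- The set of vertices covered by a set of edges. -/
def edgeVerts {V : Type*} [DecidableEq V] (E : Finset (Sym2 V)) : Finset V :=
  E.sup (Sym2.lift ⟨fun x y => ({x, y} : Finset V), fun x y => Finset.pair_comm x y⟩)

/-- A `(k, l)`-configuration: a set of `l` pairwise edge-disjoint 4-cycles whose
union contains exactly `k` vertices. -/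
def IsConfiguration {V : Type*} [DecidableEq V] (k l : ℕ)
    (D : Finset (Finset (Sym2 V))) : Prop :=
  D.card = l ∧ (∀ E ∈ D, IsFourCycle E) ∧
    (∀ E ∈ D, ∀ F ∈ D, E ≠ F → Disjoint E F) ∧
    (D.sup edgeVerts).card = k

/-- `C` is a 4-cycle system: a collection of 4-cycles whose edge sets partition
the edge set of the complete graph on `V`. -/
def IsFourCycleSystem {V : Type*} [DecidableEq V] (C : Finset (Finset (Sym2 V))) : Prop :=
  (∀ E ∈ C, IsFourCycle E) ∧ ∀ e : Sym2 V, ¬ e.IsDiag → ∃! E, E ∈ C ∧ e ∈ E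

/-- `C` is a 4-cycle packing: a set of pairwise edge-disjoint 4-cycles. -/
def IsFourCyclePacking {V : Type*} [DecidableEq V] (C : Finset (Finset (Sym2 V))) : Prop :=
  (∀ E ∈ C, IsFourCycle E) ∧ ∀ E ∈ C, ∀ F ∈ C, E ≠ F → Disjoint E F

/-- `C` is `r`-sparse: it contains no `(j+3, j)`-configuration for `2 ≤ j ≤ r`. -/
def RSparse {V : Type*} [DecidableEq V] (r : ℕ) (C : Finset (Finset (Sym2 V))) : Prop :=
  ∀ j, 2 ≤ j → j ≤ r → ∀ D ⊆ C, ¬ IsConfiguration (j + 3) j D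

/-- Two 4-cycles form a double-diamond: they are `(a,b,c,d)` and `(a,e,c,f)`,
sharing the diagonal {a,c}. -/
def IsDoubleDiamond {V : Type*} [DecidableEq V] (E F : Finset (Sym2 V)) : Prop :=
  ∃ a b c d e f : V, ([a, b, c, d, e, f] : List V).Nodup ∧
    E = cycEdges a b c d ∧ F = cycEdges a e c f

/-- `C` is D-avoiding: no two of its 4-cycles form a double-diamond. -/
def DAvoiding {V : Type*} [DecidableEq V] (C : Finset (Finset (Sym2 V))) : Prop :=
  ∀ E ∈ C, ∀ F ∈ C, ¬ IsDoubleDiamond E F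

/-- `C` is strictly `r`-sparse: `r`-sparse and D-avoiding. -/
def StrictlyRSparse {V : Type*} [DecidableEq V] (r : ℕ)
    (C : Finset (Finset (Sym2 V))) : Prop :=
  RSparse r C ∧ DAvoiding C

/-- Configurations `A` and `B` are isomorphic: there is a bijection between their
vertex sets mapping each 4-cycle of `A` to a 4-cycle of `B`. -/
def ConfigIso {V W : Type*} [DecidableEq V] [DecidableEq W]
    (A : Finset (Finset (Sym2 V))) (B : Finset (Finset (Sym2 W))) : Prop :=
  ∃ φ : V → W, Set.BijOn φ ↑(A.sup edgeVerts) ↑(B.sup edgeVerts) ∧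
    ∀ E ∈ A, E.image (Sym2.map φ) ∈ B

section Helpers

variable {V : Type*} [DecidableEq V]

lemma mem_cycEdges {e : Sym2 V} {a b c d : V} :
    e ∈ cycEdges a b c d ↔ e = s(a,b) ∨ e = s(b,c) ∨ e = s(c,d) ∨ e = s(d,a) := by
  simp [cycEdges]

lemma edgeVerts_cycEdges (a b c d : V) :
    edgeVerts (cycEdges a b c d) = {a, b, c, d} := by
  simp only [edgeVerts, cycEdges, sup_insert, sup_singleton, Sym2.lift_mk]
  ext z; simp; tauto

lemma nodup_iff_card {l : List V} : l.Nodup ↔ l.toFinset.card = l.length := by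
  constructor
  · exact fun h => List.toFinset_card_of_nodup h
  · intro h
    exact (Multiset.toFinset_card_eq_card_iff_nodup (m := (⟦l⟧ : Multiset V))).mp h

lemma cycEdges_rot (a b c d : V) : cycEdges a b c d = cycEdges b c d a := by
  ext z; simp only [mem_cycEdges]; tauto

lemma cycEdges_swap (a b c d : V) : cycEdges a b c d = cycEdges b a d c := by
  ext z; simp only [mem_cycEdges]
  rw [show s(b,a) = s(a,b) from Sym2.eq_swap, show s(a,d) = s(d,a) from Sym2.eq_swap,
    show s(d,c) = s(c,d) from Sym2.eq_swap, show s(c,b) = s(b,c) from Sym2.eq_swap]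
  tauto

lemma nodup4 {a b c d : V} :
    ([a,b,c,d] : List V).Nodup ↔ ({a,b,c,d} : Finset V).card = 4 := by
  rw [nodup_iff_card]
  have : ([a,b,c,d] : List V).toFinset = ({a,b,c,d} : Finset V) := by simp
  rw [this]; rfl

lemma nodup4_of_eq {a b c d x u v w : V} (h : ([a,b,c,d] : List V).Nodup)
    (he : ({x,u,v,w} : Finset V) = {a,b,c,d}) : ([x,u,v,w] : List V).Nodup :=
  nodup4.mpr (he ▸ nodup4.mp h)

lemma cyc_rotate {a b c d x : V} (h : ([a,b,c,d] : List V).Nodup)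
    (hx : x ∈ ({a,b,c,d} : Finset V)) :
    ∃ u v w, cycEdges a b c d = cycEdges x u v w ∧
      ({x,u,v,w} : Finset V) = {a,b,c,d} ∧ ([x,u,v,w] : List V).Nodup := by
  simp only [mem_insert, mem_singleton] at hx
  rcases hx with rfl | rfl | rfl | rfl
  · exact ⟨b, c, d, rfl, rfl, h⟩
  · refine ⟨c, d, a, cycEdges_rot _ _ _ _, ?_, ?_⟩
    · ext z; simp; tauto
    · exact nodup4_of_eq h (by ext z; simp; tauto)
  · refine ⟨d, a, b, by rw [cycEdges_rot, cycEdges_rot], ?_, ?_⟩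
    · ext z; simp; tauto
    · exact nodup4_of_eq h (by ext z; simp; tauto)
  · refine ⟨a, b, c, by rw [cycEdges_rot, cycEdges_rot, cycEdges_rot], ?_, ?_⟩
    · ext z; simp; tauto
    · exact nodup4_of_eq h (by ext z; simp; tauto)

lemma cyc_edge_front {a b c d x y : V} (h : ([a,b,c,d] : List V).Nodup)
    (he : s(x,y) ∈ cycEdges a b c d) :
    ∃ u v, cycEdges a b c d = cycEdges x y u v ∧
      ({x,y,u,v} : Finset V) = {a,b,c,d} ∧ ([x,y,u,v] : List V).Nodup := by
  rw [mem_cycEdges] at he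
  rcases he with he | he | he | he <;> rw [Sym2.eq_iff] at he <;>
    rcases he with ⟨rfl, rfl⟩ | ⟨rfl, rfl⟩
  · exact ⟨c, d, rfl, rfl, h⟩
  · refine ⟨d, c, cycEdges_swap _ _ _ _, ?_, ?_⟩
    · ext z; simp; tauto
    · exact nodup4_of_eq h (by ext z; simp; tauto)
  · refine ⟨d, a, cycEdges_rot _ _ _ _, ?_, ?_⟩
    · ext z; simp; tauto
    · exact nodup4_of_eq h (by ext z; simp; tauto)
  · refine ⟨a, d, by rw [cycEdges_rot, cycEdges_swap], ?_, ?_⟩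
    · ext z; simp; tauto
    · exact nodup4_of_eq h (by ext z; simp; tauto)
  · refine ⟨a, b, by rw [cycEdges_rot, cycEdges_rot], ?_, ?_⟩
    · ext z; simp; tauto
    · exact nodup4_of_eq h (by ext z; simp; tauto)
  · refine ⟨b, a, by rw [cycEdges_rot, cycEdges_rot, cycEdges_swap], ?_, ?_⟩
    · ext z; simp; tauto
    · exact nodup4_of_eq h (by ext z; simp; tauto)
  · refine ⟨b, c, by rw [cycEdges_rot, cycEdges_rot, cycEdges_rot], ?_, ?_⟩
    · ext z; simp; tauto
    · exact nodup4_of_eq h (by ext z; simp; tauto)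
  · refine ⟨c, b, by rw [cycEdges_rot, cycEdges_rot, cycEdges_rot, cycEdges_swap], ?_, ?_⟩
    · ext z; simp; tauto
    · exact nodup4_of_eq h (by ext z; simp; tauto)

lemma cyc_diag {a b c d x y : V} (h : ([a,b,c,d] : List V).Nodup)
    (hx : x ∈ ({a,b,c,d} : Finset V)) (hy : y ∈ ({a,b,c,d} : Finset V)) (hxy : x ≠ y)
    (hne : s(x,y) ∉ cycEdges a b c d) :
    ∃ u v, cycEdges a b c d = cycEdges x u y v ∧
      ({x,u,y,v} : Finset V) = {a,b,c,d} ∧ ([x,u,y,v] : List V).Nodup := by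
  obtain ⟨u, v, w, hE, hs, hnd⟩ := cyc_rotate h hx
  have hy' : y ∈ ({x,u,v,w} : Finset V) := hs ▸ hy
  simp only [mem_insert, mem_singleton] at hy'
  rcases hy' with rfl | rfl | rfl | rfl
  · exact absurd rfl hxy
  · exact absurd (hE ▸ (by rw [mem_cycEdges]; tauto : s(x,y) ∈ cycEdges x y v w)) hne
  · exact ⟨u, w, hE, hs, hnd⟩
  · refine absurd (hE ▸ ?_) hne
    rw [mem_cycEdges]
    right; right; right; exact Sym2.eq_swap

lemma two_adj_of_three {a b c d x y z : V} (h : ([a,b,c,d] : List V).Nodup)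
    (hx : x ∈ ({a,b,c,d} : Finset V)) (hy : y ∈ ({a,b,c,d} : Finset V))
    (hz : z ∈ ({a,b,c,d} : Finset V)) (hxy : x ≠ y) (hxz : x ≠ z) (hyz : y ≠ z) :
    (s(x,y) ∈ cycEdges a b c d ∧ s(y,z) ∈ cycEdges a b c d) ∨
    (s(x,y) ∈ cycEdges a b c d ∧ s(x,z) ∈ cycEdges a b c d) ∨
    (s(y,z) ∈ cycEdges a b c d ∧ s(x,z) ∈ cycEdges a b c d) := by
  obtain ⟨u, v, w, hE, hs, hnd⟩ := cyc_rotate h hx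
  have m1 : s(x,u) ∈ cycEdges a b c d := by rw [hE, mem_cycEdges]; tauto
  have m2 : s(u,v) ∈ cycEdges a b c d := by rw [hE, mem_cycEdges]; tauto
  have m3 : s(v,w) ∈ cycEdges a b c d := by rw [hE, mem_cycEdges]; tauto
  have m4 : s(x,w) ∈ cycEdges a b c d := by
    rw [show s(x,w) = s(w,x) from Sym2.eq_swap, hE, mem_cycEdges]; tauto
  have m5 : s(v,u) ∈ cycEdges a b c d := by
    rw [show s(v,u) = s(u,v) from Sym2.eq_swap]; exact m2
  have m6 : s(w,v) ∈ cycEdges a b c d := by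
    rw [show s(w,v) = s(v,w) from Sym2.eq_swap]; exact m3
  have hy' : y ∈ ({x,u,v,w} : Finset V) := hs ▸ hy
  have hz' : z ∈ ({x,u,v,w} : Finset V) := hs ▸ hz
  simp only [mem_insert, mem_singleton] at hy' hz'
  rcases hy' with rfl | rfl | rfl | rfl <;> rcases hz' with rfl | rfl | rfl | rfl <;>
    first
      | exact absurd rfl hxy
      | exact absurd rfl hxz
      | exact absurd rfl hyz
      | exact Or.inl ⟨m1, m2⟩
      | exact Or.inr (Or.inl ⟨m1, m4⟩)
      | exact Or.inr (Or.inr ⟨m5, m1⟩)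
      | exact Or.inr (Or.inr ⟨m3, m4⟩)
      | exact Or.inr (Or.inl ⟨m4, m1⟩)
      | exact Or.inl ⟨m4, m6⟩

lemma inter_card_le_two {a b c d p q r s : V}
    (h1 : ([a,b,c,d] : List V).Nodup) (h2 : ([p,q,r,s] : List V).Nodup)
    (hd : Disjoint (cycEdges a b c d) (cycEdges p q r s)) :
    (({a,b,c,d} : Finset V) ∩ {p,q,r,s}).card ≤ 2 := by
  by_contra hc
  push_neg at hc
  obtain ⟨T, hTsub, hT3⟩ := Finset.exists_subset_card_eq (n := 3) hc
  obtain ⟨x, y, z, hxy, hxz, hyz, hT⟩ := Finset.card_eq_three.mp hT3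
  have hxI := hTsub (show x ∈ T by rw [hT]; simp)
  have hyI := hTsub (show y ∈ T by rw [hT]; simp)
  have hzI := hTsub (show z ∈ T by rw [hT]; simp)
  have hA := two_adj_of_three h1 (mem_inter.mp hxI).1 (mem_inter.mp hyI).1
    (mem_inter.mp hzI).1 hxy hxz hyz
  have hB := two_adj_of_three h2 (mem_inter.mp hxI).2 (mem_inter.mp hyI).2
    (mem_inter.mp hzI).2 hxy hxz hyz
  have k1 : ¬(s(x,y) ∈ cycEdges a b c d ∧ s(x,y) ∈ cycEdges p q r s) :=
    fun ⟨h, h'⟩ => disjoint_left.mp hd h h'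
  have k2 : ¬(s(y,z) ∈ cycEdges a b c d ∧ s(y,z) ∈ cycEdges p q r s) :=
    fun ⟨h, h'⟩ => disjoint_left.mp hd h h'
  have k3 : ¬(s(x,z) ∈ cycEdges a b c d ∧ s(x,z) ∈ cycEdges p q r s) :=
    fun ⟨h, h'⟩ => disjoint_left.mp hd h h'
  rcases hA with ⟨u1, u2⟩ | ⟨u1, u2⟩ | ⟨u1, u2⟩ <;>
    rcases hB with ⟨w1, w2⟩ | ⟨w1, w2⟩ | ⟨w1, w2⟩ <;>
    first
      | exact k1 ⟨u1, w1⟩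
      | exact k2 ⟨u2, w1⟩
      | exact k3 ⟨u2, w2⟩
      | exact k2 ⟨u1, w2⟩
      | exact k2 ⟨u1, w1⟩

lemma image_cycEdges (φ : V → V) (a b c d : V) :
    (cycEdges a b c d).image (Sym2.map φ) = cycEdges (φ a) (φ b) (φ c) (φ d) := by
  simp [cycEdges, Finset.image_insert, Sym2.map_pair_eq]

end Helpers

section Main

variable {V : Type*} [DecidableEq V]

lemma listFinset6a (x w y z u v : V) :
    ([x,w,y,z,u,v] : List V).toFinset = ({x,y,u,v} : Finset V) ∪ {x,w,y,z} := by
  ext t; simp; tauto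

lemma listFinset6b (x u y v w z : V) :
    ([x,u,y,v,w,z] : List V).toFinset = ({x,u,y,v} : Finset V) ∪ {x,y,w,z} := by
  ext t; simp; tauto

lemma listFinset6c (x u y v w z : V) :
    ([x,u,y,v,w,z] : List V).toFinset = ({x,u,y,v} : Finset V) ∪ {x,w,y,z} := by
  ext t; simp; tauto

lemma listFinset7 (x u v w u2 v2 w2 : V) :
    ([x,u,v,w,u2,v2,w2] : List V).toFinset = ({x,u,v,w} : Finset V) ∪ {x,u2,v2,w2} := by
  ext t; simp; tauto

lemma listFinset8 (a b c d p q r s : V) :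
    ([a,b,c,d,p,q,r,s] : List V).toFinset = ({a,b,c,d} : Finset V) ∪ {p,q,r,s} := by
  ext t; simp; tauto

set_option maxHeartbeats 1000000 in
lemma part1 (E F : Finset (Sym2 V)) (hE : IsFourCycle E) (hF : IsFourCycle F)
    (hne : E ≠ F) (hdisj : Disjoint E F) :
    ((edgeVerts E ∪ edgeVerts F).card = 6 ∨ (edgeVerts E ∪ edgeVerts F).card = 7 ∨
        (edgeVerts E ∪ edgeVerts F).card = 8) ∧
      ((edgeVerts E ∪ edgeVerts F).card = 6 →
        ∃ a b c d e f : V, ([a, b, c, d, e, f] : List V).Nodup ∧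
          (({E, F} : Finset (Finset (Sym2 V))) = {cycEdges a b c d, cycEdges a e c f} ∨
           ({E, F} : Finset (Finset (Sym2 V))) = {cycEdges a b c d, cycEdges a c e f})) ∧
      ((edgeVerts E ∪ edgeVerts F).card = 7 →
        ∃ a b c d e f g : V, ([a, b, c, d, e, f, g] : List V).Nodup ∧
          ({E, F} : Finset (Finset (Sym2 V))) = {cycEdges a b c d, cycEdges a e f g}) ∧
      ((edgeVerts E ∪ edgeVerts F).card = 8 →
        ∃ a b c d e f g h : V, ([a, b, c, d, e, f, g, h] : List V).Nodup ∧
          ({E, F} : Finset (Finset (Sym2 V))) = {cycEdges a b c d, cycEdges e f g h}) := by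
  obtain ⟨a, b, c, d, h1, rfl⟩ := hE
  obtain ⟨p, q, r, s, h2, rfl⟩ := hF
  rw [edgeVerts_cycEdges, edgeVerts_cycEdges]
  have hsum : (({a,b,c,d} : Finset V) ∪ {p,q,r,s}).card
      + (({a,b,c,d} : Finset V) ∩ {p,q,r,s}).card = 4 + 4 := by
    rw [card_union_add_card_inter, nodup4.mp h1, nodup4.mp h2]
  have hle := inter_card_le_two h1 h2 hdisj
  refine ⟨by omega, ?_, ?_, ?_⟩
  · -- six vertices
    intro h6
    have hI2 : (({a,b,c,d} : Finset V) ∩ {p,q,r,s}).card = 2 := by omega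
    obtain ⟨x, y, hxy, hIxy⟩ := Finset.card_eq_two.mp hI2
    have hxI : x ∈ ({a,b,c,d} : Finset V) ∩ {p,q,r,s} := by rw [hIxy]; simp
    have hyI : y ∈ ({a,b,c,d} : Finset V) ∩ {p,q,r,s} := by rw [hIxy]; simp
    have hxE := (mem_inter.mp hxI).1
    have hxF := (mem_inter.mp hxI).2
    have hyE := (mem_inter.mp hyI).1
    have hyF := (mem_inter.mp hyI).2
    by_cases hE1 : s(x,y) ∈ cycEdges a b c d
    · have hF1 : s(x,y) ∉ cycEdges p q r s := disjoint_left.mp hdisj hE1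
      obtain ⟨u, v, hEe, hEs, _⟩ := cyc_edge_front h1 hE1
      obtain ⟨w, z, hFe, hFs, _⟩ := cyc_diag h2 hxF hyF hxy hF1
      refine ⟨x, w, y, z, u, v, ?_, Or.inr ?_⟩
      · rw [nodup_iff_card, listFinset6a, hEs, hFs, h6]; rfl
      · rw [hEe, hFe, Finset.pair_comm]
    · by_cases hF1 : s(x,y) ∈ cycEdges p q r s
      · obtain ⟨w, z, hFe, hFs, _⟩ := cyc_edge_front h2 hF1
        obtain ⟨u, v, hEe, hEs, _⟩ := cyc_diag h1 hxE hyE hxy hE1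
        refine ⟨x, u, y, v, w, z, ?_, Or.inr ?_⟩
        · rw [nodup_iff_card, listFinset6b, hEs, hFs, h6]; rfl
        · rw [hEe, hFe]
      · obtain ⟨u, v, hEe, hEs, _⟩ := cyc_diag h1 hxE hyE hxy hE1
        obtain ⟨w, z, hFe, hFs, _⟩ := cyc_diag h2 hxF hyF hxy hF1
        refine ⟨x, u, y, v, w, z, ?_, Or.inl ?_⟩
        · rw [nodup_iff_card, listFinset6c, hEs, hFs, h6]; rfl
        · rw [hEe, hFe]
  · -- seven vertices
    intro h7
    have hI1 : (({a,b,c,d} : Finset V) ∩ {p,q,r,s}).card = 1 := by omega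
    obtain ⟨x, hIx⟩ := Finset.card_eq_one.mp hI1
    have hxI : x ∈ ({a,b,c,d} : Finset V) ∩ {p,q,r,s} := by rw [hIx]; simp
    obtain ⟨u, v, w, hEe, hEs, _⟩ := cyc_rotate h1 (mem_inter.mp hxI).1
    obtain ⟨u2, v2, w2, hFe, hFs, _⟩ := cyc_rotate h2 (mem_inter.mp hxI).2
    refine ⟨x, u, v, w, u2, v2, w2, ?_, ?_⟩
    · rw [nodup_iff_card, listFinset7, hEs, hFs, h7]; rfl
    · rw [hEe, hFe]
  · -- eight vertices
    intro h8
    refine ⟨a, b, c, d, p, q, r, s, ?_, rfl⟩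
    rw [nodup_iff_card, listFinset8, h8]; rfl

end Main


section Part2

variable {V : Type*} [DecidableEq V]

lemma union6 (a b c d e f : V) :
    ({a,b,c,d} : Finset V) ∪ {a,e,c,f} = {a,b,c,d,e,f} := by
  ext t; simp; tauto

lemma nodup6_unpack {a b c d e f : V} (h : ([a,b,c,d,e,f] : List V).Nodup) :
    (a ≠ b ∧ a ≠ c ∧ a ≠ d ∧ a ≠ e ∧ a ≠ f) ∧ (b ≠ c ∧ b ≠ d ∧ b ≠ e ∧ b ≠ f) ∧
      (c ≠ d ∧ c ≠ e ∧ c ≠ f) ∧ (d ≠ e ∧ d ≠ f) ∧ e ≠ f := by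
  simp only [List.nodup_cons, List.mem_cons, List.not_mem_nil, or_false, not_or,
    List.nodup_nil, and_true] at h
  tauto

lemma pick_diag {a' b' c' d' e' f' : V} (h : ([a',b',c',d',e',f'] : List V).Nodup)
    {t : V} (m1 : t ∈ ({a',b',c',d'} : Finset V)) (m2 : t ∈ ({a',c',e',f'} : Finset V)) :
    t = a' ∨ t = c' := by
  obtain ⟨⟨hab,hac,had,hae,haf⟩,⟨hbc,hbd,hbe,hbf⟩,⟨hcd,hce,hcf⟩,⟨hde,hdf⟩,hef⟩ :=
    nodup6_unpack h
  simp only [mem_insert, mem_singleton] at m1 m2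
  rcases m1 with rfl | rfl | rfl | rfl
  · exact Or.inl rfl
  · rcases m2 with h' | h' | h' | h'
    · exact absurd h'.symm hab
    · exact absurd h' hbc
    · exact absurd h' hbe
    · exact absurd h' hbf
  · exact Or.inr rfl
  · rcases m2 with h' | h' | h' | h'
    · exact absurd h'.symm had
    · exact absurd h'.symm hcd
    · exact absurd h' hde
    · exact absurd h' hdf

lemma diag_not_mem_dd {a b c d e f : V} (h : ([a,b,c,d,e,f] : List V).Nodup) :
    s(a,c) ∉ cycEdges a e c f := by
  obtain ⟨⟨hab,hac,had,hae,haf⟩,⟨hbc,hbd,hbe,hbf⟩,⟨hcd,hce,hcf⟩,⟨hde,hdf⟩,hef⟩ :=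
    nodup6_unpack h
  intro hm
  rw [mem_cycEdges] at hm
  rcases hm with h' | h' | h' | h' <;> rw [Sym2.eq_iff] at h' <;>
    rcases h' with ⟨h1', h2'⟩ | ⟨h1', h2'⟩
  · exact absurd h2' hce
  · exact absurd h1' hae
  · exact absurd h1' hae
  · exact absurd h1' hac
  · exact absurd h1' hac
  · exact absurd h1' haf
  · exact absurd h1' haf
  · exact absurd h2' hcf

lemma diag_not_mem_cyc {a b c d e f : V} (h : ([a,b,c,d,e,f] : List V).Nodup) :
    s(a,c) ∉ cycEdges a b c d := by
  obtain ⟨⟨hab,hac,had,hae,haf⟩,⟨hbc,hbd,hbe,hbf⟩,⟨hcd,hce,hcf⟩,⟨hde,hdf⟩,hef⟩ :=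
    nodup6_unpack h
  intro hm
  rw [mem_cycEdges] at hm
  rcases hm with h' | h' | h' | h' <;> rw [Sym2.eq_iff] at h' <;>
    rcases h' with ⟨h1', h2'⟩ | ⟨h1', h2'⟩
  · exact absurd h2'.symm hbc
  · exact absurd h1' hab
  · exact absurd h1' hab
  · exact absurd h1' hac
  · exact absurd h1' hac
  · exact absurd h1' had
  · exact absurd h1' had
  · exact absurd h2' hcd

lemma ab_not_mem_dd {a b c d e f : V} (h : ([a,b,c,d,e,f] : List V).Nodup) :
    s(a,b) ∉ cycEdges a e c f := by
  obtain ⟨⟨hab,hac,had,hae,haf⟩,⟨hbc,hbd,hbe,hbf⟩,⟨hcd,hce,hcf⟩,⟨hde,hdf⟩,hef⟩ :=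
    nodup6_unpack h
  intro hm
  rw [mem_cycEdges] at hm
  rcases hm with h' | h' | h' | h' <;> rw [Sym2.eq_iff] at h' <;>
    rcases h' with ⟨h1', h2'⟩ | ⟨h1', h2'⟩
  · exact absurd h2' hbe
  · exact absurd h1' hae
  · exact absurd h1' hae
  · exact absurd h1' hac
  · exact absurd h1' hac
  · exact absurd h1' haf
  · exact absurd h1' haf
  · exact absurd h2' hbf

set_option maxHeartbeats 1000000 in
lemma part2 (a b c d e f a' b' c' d' e' f' : V)
    (h1 : ([a, b, c, d, e, f] : List V).Nodup)
    (h2 : ([a', b', c', d', e', f'] : List V).Nodup)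
    (φ : V → V)
    (hbij : Set.BijOn φ
      ↑(({cycEdges a b c d, cycEdges a e c f} : Finset (Finset (Sym2 V))).sup edgeVerts)
      ↑(({cycEdges a' b' c' d', cycEdges a' c' e' f'} : Finset (Finset (Sym2 V))).sup edgeVerts))
    (hmap : ∀ E ∈ ({cycEdges a b c d, cycEdges a e c f} : Finset (Finset (Sym2 V))),
      E.image (Sym2.map φ) ∈
        ({cycEdges a' b' c' d', cycEdges a' c' e' f'} : Finset (Finset (Sym2 V)))) :
    False := by
  have hac : a ≠ c := (nodup6_unpack h1).1.2.1
  have hSA : (({cycEdges a b c d, cycEdges a e c f} : Finset (Finset (Sym2 V))).sup edgeVerts)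
      = ({a,b,c,d,e,f} : Finset V) := by
    rw [sup_insert, sup_singleton, edgeVerts_cycEdges, edgeVerts_cycEdges,
      sup_eq_union, union6]
  have hinj : ∀ u ∈ ({a,b,c,d,e,f} : Finset V), ∀ v ∈ ({a,b,c,d,e,f} : Finset V),
      φ u = φ v → u = v := by
    intro u hu v hv huv
    exact hbij.2.1 (by rw [hSA]; exact Finset.mem_coe.mpr hu)
      (by rw [hSA]; exact Finset.mem_coe.mpr hv) huv
  have mem_pull : ∀ u1 u2 v1 v2 v3 v4 : V,
      u1 ∈ ({a,b,c,d,e,f} : Finset V) → u2 ∈ ({a,b,c,d,e,f} : Finset V) →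
      v1 ∈ ({a,b,c,d,e,f} : Finset V) → v2 ∈ ({a,b,c,d,e,f} : Finset V) →
      v3 ∈ ({a,b,c,d,e,f} : Finset V) → v4 ∈ ({a,b,c,d,e,f} : Finset V) →
      s(φ u1, φ u2) ∈ cycEdges (φ v1) (φ v2) (φ v3) (φ v4) →
      s(u1,u2) ∈ cycEdges v1 v2 v3 v4 := by
    intro u1 u2 v1 v2 v3 v4 m1 m2 m3 m4 m5 m6 hmem
    have pull : ∀ w1 w2 : V, w1 ∈ ({a,b,c,d,e,f} : Finset V) →
        w2 ∈ ({a,b,c,d,e,f} : Finset V) →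
        s(φ u1, φ u2) = s(φ w1, φ w2) → s(u1,u2) = s(w1,w2) := by
      intro w1 w2 n1 n2 hs
      rw [Sym2.eq_iff] at hs ⊢
      rcases hs with ⟨e1, e2⟩ | ⟨e1, e2⟩
      · exact Or.inl ⟨hinj _ m1 _ n1 e1, hinj _ m2 _ n2 e2⟩
      · exact Or.inr ⟨hinj _ m1 _ n2 e1, hinj _ m2 _ n1 e2⟩
    rw [mem_cycEdges] at hmem ⊢
    rcases hmem with h | h | h | h
    · exact Or.inl (pull _ _ m3 m4 h)
    · exact Or.inr (Or.inl (pull _ _ m4 m5 h))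
    · exact Or.inr (Or.inr (Or.inl (pull _ _ m5 m6 h)))
    · exact Or.inr (Or.inr (Or.inr (pull _ _ m6 m3 h)))
  have hG1 : (cycEdges a b c d).image (Sym2.map φ)
      ∈ ({cycEdges a' b' c' d', cycEdges a' c' e' f'} : Finset (Finset (Sym2 V))) :=
    hmap _ (mem_insert_self _ _)
  have hG2 : (cycEdges a e c f).image (Sym2.map φ)
      ∈ ({cycEdges a' b' c' d', cycEdges a' c' e' f'} : Finset (Finset (Sym2 V))) :=
    hmap _ (mem_insert_of_mem (mem_singleton_self _))
  rw [image_cycEdges] at hG1 hG2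
  simp only [mem_insert, mem_singleton] at hG1 hG2
  have hφac : φ a ≠ φ c := fun hh => hac (hinj a (by simp) c (by simp) hh)
  have hne12 : cycEdges (φ a) (φ b) (φ c) (φ d) ≠ cycEdges (φ a) (φ e) (φ c) (φ f) := by
    intro heq
    have hm : s(φ a, φ b) ∈ cycEdges (φ a) (φ e) (φ c) (φ f) :=
      heq ▸ (mem_cycEdges.mpr (Or.inl rfl))
    have := mem_pull a b a e c f (by simp) (by simp) (by simp) (by simp) (by simp)
      (by simp) hm
    exact ab_not_mem_dd h1 this
  rcases hG1 with hA1 | hA1 <;> rcases hG2 with hA2 | hA2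
  · exact hne12 (hA1.trans hA2.symm)
  · -- G1 = F1, G2 = F2
    have V1 := congrArg edgeVerts hA1
    have V2 := congrArg edgeVerts hA2
    rw [edgeVerts_cycEdges, edgeVerts_cycEdges] at V1 V2
    have hpa : φ a = a' ∨ φ a = c' :=
      pick_diag h2 (V1 ▸ (by simp : φ a ∈ ({φ a, φ b, φ c, φ d} : Finset V)))
        (V2 ▸ (by simp : φ a ∈ ({φ a, φ e, φ c, φ f} : Finset V)))
    have hpc : φ c = a' ∨ φ c = c' :=
      pick_diag h2 (V1 ▸ (by simp : φ c ∈ ({φ a, φ b, φ c, φ d} : Finset V)))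
        (V2 ▸ (by simp : φ c ∈ ({φ a, φ e, φ c, φ f} : Finset V)))
    have hs : s(φ a, φ c) = s(a', c') := by
      rcases hpa with h | h <;> rcases hpc with h' | h'
      · exact absurd (h.trans h'.symm) hφac
      · rw [h, h']
      · rw [h, h']; exact Sym2.eq_swap
      · exact absurd (h.trans h'.symm) hφac
    have hmem : s(φ a, φ c) ∈ cycEdges (φ a) (φ e) (φ c) (φ f) := by
      rw [hs, hA2, mem_cycEdges]
      exact Or.inl rfl
    have := mem_pull a c a e c f (by simp) (by simp) (by simp) (by simp) (by simp)
      (by simp) hmem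
    exact diag_not_mem_dd h1 this
  · -- G1 = F2, G2 = F1
    have V1 := congrArg edgeVerts hA1
    have V2 := congrArg edgeVerts hA2
    rw [edgeVerts_cycEdges, edgeVerts_cycEdges] at V1 V2
    have hpa : φ a = a' ∨ φ a = c' :=
      pick_diag h2 (V2 ▸ (by simp : φ a ∈ ({φ a, φ e, φ c, φ f} : Finset V)))
        (V1 ▸ (by simp : φ a ∈ ({φ a, φ b, φ c, φ d} : Finset V)))
    have hpc : φ c = a' ∨ φ c = c' :=
      pick_diag h2 (V2 ▸ (by simp : φ c ∈ ({φ a, φ e, φ c, φ f} : Finset V)))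
        (V1 ▸ (by simp : φ c ∈ ({φ a, φ b, φ c, φ d} : Finset V)))
    have hs : s(φ a, φ c) = s(a', c') := by
      rcases hpa with h | h <;> rcases hpc with h' | h'
      · exact absurd (h.trans h'.symm) hφac
      · rw [h, h']
      · rw [h, h']; exact Sym2.eq_swap
      · exact absurd (h.trans h'.symm) hφac
    have hmem : s(φ a, φ c) ∈ cycEdges (φ a) (φ b) (φ c) (φ d) := by
      rw [hs, hA1, mem_cycEdges]
      exact Or.inl rfl
    have := mem_pull a c a b c d (by simp) (by simp) (by simp) (by simp) (by simp)
      (by simp) hmem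
    exact diag_not_mem_cyc h1 this
  · exact hne12 (hA1.trans hA2.symm)

end Part2


/-- Two distinct edge-disjoint 4-cycles cover 6, 7 or 8 vertices (in particular,
no `(5,2)`-configuration exists) and form one of four configurations: one of the two
`(6,2)`-configurations (the double-diamond `{(a,b,c,d), (a,e,c,f)}` or
`{(a,b,c,d), (a,c,e,f)}`), the `(7,2)`-configuration `{(a,b,c,d), (a,e,f,g)}`, or the
`(8,2)`-configuration `{(a,b,c,d), (e,f,g,h)}`; moreover the two `(6,2)`-forms are
not isomorphic. -/
theorem two_fourCycle_configuration_classification {V : Type*} [DecidableEq V] :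
    (∀ E F : Finset (Sym2 V), IsFourCycle E → IsFourCycle F → E ≠ F → Disjoint E F →
      ((edgeVerts E ∪ edgeVerts F).card = 6 ∨ (edgeVerts E ∪ edgeVerts F).card = 7 ∨
        (edgeVerts E ∪ edgeVerts F).card = 8) ∧
      ((edgeVerts E ∪ edgeVerts F).card = 6 →
        ∃ a b c d e f : V, ([a, b, c, d, e, f] : List V).Nodup ∧
          (({E, F} : Finset (Finset (Sym2 V))) = {cycEdges a b c d, cycEdges a e c f} ∨
           ({E, F} : Finset (Finset (Sym2 V))) = {cycEdges a b c d, cycEdges a c e f})) ∧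
      ((edgeVerts E ∪ edgeVerts F).card = 7 →
        ∃ a b c d e f g : V, ([a, b, c, d, e, f, g] : List V).Nodup ∧
          ({E, F} : Finset (Finset (Sym2 V))) = {cycEdges a b c d, cycEdges a e f g}) ∧
      ((edgeVerts E ∪ edgeVerts F).card = 8 →
        ∃ a b c d e f g h : V, ([a, b, c, d, e, f, g, h] : List V).Nodup ∧
          ({E, F} : Finset (Finset (Sym2 V))) = {cycEdges a b c d, cycEdges e f g h})) ∧
    (∀ a b c d e f a' b' c' d' e' f' : V,
      ([a, b, c, d, e, f] : List V).Nodup → ([a', b', c', d', e', f'] : List V).Nodup →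
      ¬ ConfigIso
        ({cycEdges a b c d, cycEdges a e c f} : Finset (Finset (Sym2 V)))
        ({cycEdges a' b' c' d', cycEdges a' c' e' f'} : Finset (Finset (Sym2 V)))) := by
  constructor
  · intro E F hE hF hne hdisj
    exact part1 E F hE hF hne hdisj
  · intro a b c d e f a' b' c' d' e' f' h1 h2 hiso
    obtain ⟨φ, hbij, hmap⟩ := hiso
    exact part2 a b c d e f a' b' c' d' e' f' h1 h2 φ hbij hmap
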